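/- Let s ∈ ℚ be a rational number that is neither an integer nor a half-integer (i.e. 2s ∉ ℤ). If A ⊆ ℝ² is a set whose distance set satisfies Δ(A) ⊆ {n + s : n ∈ ℕ}, then A has at most 3 elements. -/

import Mathlib

open scoped BigOperators

set_option maxHeartbeats 2000000
set_option maxRecDepth 100000

/-- The Cayley–Menger polynomial for four points, as a polynomial in the six
squared distances `u = d₁₂², v = d₁₃², w = d₁₄², x = d₂₃², y = d₂₄², z = d₃₄²`. -/
def cmF {R : Type*} [CommRing R] (u v w x y z : R) : R :=
  -2*u^2*z - 2*u*v*x + 2*u*v*y + 2*u*v*z + 2*u*w*x - 2*u*w*y + 2*u*w*z + 2*u*x*z + 2*u*y*z - 2*u*z^2 - 2*v^2*y + 2*v*w*x + 2*v*w*y - 2*v*w*z + 2*v*x*y - 2*v*y^2 + 2*v*y*z - 2*w^2*x - 2*w*x^2 + 2*w*x*y + 2*w*x*z - 2*x*y*z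

/-- Four points in the plane always have vanishing Cayley–Menger determinant. -/
lemma cm_geom (x1 y1 x2 y2 x3 y3 x4 y4 : ℝ) :
    cmF ((x1-x2)^2+(y1-y2)^2) ((x1-x3)^2+(y1-y3)^2) ((x1-x4)^2+(y1-y4)^2)
      ((x2-x3)^2+(y2-y3)^2) ((x2-x4)^2+(y2-y4)^2) ((x3-x4)^2+(y3-y4)^2) = 0 := by
  simp only [cmF]; ring

/-- A rational root of a monic integer polynomial of degree 6 is an integer. -/
lemma int_of_monic_root (t : ℚ) (c5 c4 c3 c2 c1 c0 : ℤ)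
    (h : t^6 + c5*t^5 + c4*t^4 + c3*t^3 + c2*t^2 + c1*t + c0 = 0) :
    ∃ m : ℤ, t = (m : ℚ) := by
  have hd0 : ((t.den : ℚ)) ≠ 0 := by
    exact_mod_cast t.den_nz
  have hnum := Rat.num_div_den t
  rw [div_eq_iff hd0] at hnum
  have castz : ((t.num^6 + c5*t.num^5*(t.den:ℤ) + c4*t.num^4*(t.den:ℤ)^2 + c3*t.num^3*(t.den:ℤ)^3
      + c2*t.num^2*(t.den:ℤ)^4 + c1*t.num*(t.den:ℤ)^5 + c0*(t.den:ℤ)^6 : ℤ) : ℚ) = ((0:ℤ):ℚ) := by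
    push_cast
    rw [hnum]
    linear_combination ((t.den:ℚ))^6 * h
  have hZ := Int.cast_injective castz
  have hdvd : (t.den : ℤ) ∣ t.num^6 := by
    refine ⟨-(c5*t.num^5 + c4*t.num^4*(t.den:ℤ) + c3*t.num^3*(t.den:ℤ)^2
      + c2*t.num^2*(t.den:ℤ)^3 + c1*t.num*(t.den:ℤ)^4 + c0*(t.den:ℤ)^5), ?_⟩
    linear_combination hZ
  have hdvd' : t.den ∣ t.num.natAbs ^ 6 := by
    have h2 := Int.natAbs_dvd_natAbs.mpr hdvd
    simpa [Int.natAbs_pow] using h2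
  have hden1 : t.den = 1 := (t.reduced.symm.pow_right 6).eq_one_of_dvd hdvd'
  refine ⟨t.num, ?_⟩
  rw [← Rat.num_div_den t, hden1]
  simp

/-- If the Cayley–Menger polynomial vanishes at squared shifted-integer distances,
then `2s` is an integer. -/
lemma cm_int_root (a b c d e f : ℤ) (s : ℚ)
    (h : cmF (((a:ℚ)+s)^2) (((b:ℚ)+s)^2) (((c:ℚ)+s)^2)
      (((d:ℚ)+s)^2) (((e:ℚ)+s)^2) (((f:ℚ)+s)^2) = 0) :
    ∃ m : ℤ, 2*s = (m : ℚ) := by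
  apply int_of_monic_root (2*s)
    (2*a + 2*b + 2*c + 2*d + 2*e + 2*f)
    (-6*a^2 + 8*a*b + 8*a*c + 8*a*d + 8*a*e - 6*b^2 + 8*b*c + 8*b*d + 8*b*f - 6*c^2 + 8*c*e + 8*c*f - 6*d^2 + 8*d*e + 8*d*f - 6*e^2 + 8*e*f - 6*f^2)
    (-16*a^3 + 8*a^2*b + 8*a^2*c + 8*a^2*d + 8*a^2*e - 32*a^2*f + 8*a*b^2 - 32*a*b*d + 32*a*b*e + 32*a*b*f + 8*a*c^2 + 32*a*c*d - 32*a*c*e + 32*a*c*f + 8*a*d^2 + 32*a*d*f + 8*a*e^2 + 32*a*e*f - 32*a*f^2 - 16*b^3 + 8*b^2*c + 8*b^2*d - 32*b^2*e + 8*b^2*f + 8*b*c^2 + 32*b*c*d + 32*b*c*e - 32*b*c*f + 8*b*d^2 + 32*b*d*e - 32*b*e^2 + 32*b*e*f + 8*b*f^2 - 16*c^3 - 32*c^2*d + 8*c^2*e + 8*c^2*f - 32*c*d^2 + 32*c*d*e + 32*c*d*f + 8*c*e^2 + 8*c*f^2 - 16*d^3 + 8*d^2*e + 8*d^2*f + 8*d*e^2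 - 32*d*e*f + 8*d*f^2 - 16*e^3 + 8*e^2*f + 8*e*f^2 - 16*f^3)
    (-8*a^4 - 64*a^3*f + 8*a^2*b^2 - 32*a^2*b*d + 32*a^2*b*e + 32*a^2*b*f + 8*a^2*c^2 + 32*a^2*c*d - 32*a^2*c*e + 32*a^2*c*f + 8*a^2*d^2 + 32*a^2*d*f + 8*a^2*e^2 + 32*a^2*e*f - 64*a^2*f^2 - 32*a*b^2*d + 32*a*b^2*e + 32*a*b^2*f - 32*a*b*d^2 + 32*a*b*e^2 + 32*a*b*f^2 + 32*a*c^2*d - 32*a*c^2*e + 32*a*c^2*f + 32*a*c*d^2 - 32*a*c*e^2 + 32*a*c*f^2 + 32*a*d^2*f + 32*a*d*f^2 + 32*a*e^2*f + 32*a*e*f^2 - 64*a*f^3 - 8*b^4 - 64*b^3*e + 8*b^2*c^2 + 32*b^2*c*d + 32*b^2*c*e - 32*b^2*c*f + 8*b^2*d^2 + 32*b^2*d*e - 64*b^2*e^2 + 32*b^2*e*f + 8*b^2*f^2 + 32*b*c^2*d + 32*b*c^2*e - 32*b*c^2*f + 32*b*c*d^2 + 32*b*c*e^2 - 32*b*c*f^2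 + 32*b*d^2*e + 32*b*d*e^2 - 64*b*e^3 + 32*b*e^2*f + 32*b*e*f^2 - 8*c^4 - 64*c^3*d - 64*c^2*d^2 + 32*c^2*d*e + 32*c^2*d*f + 8*c^2*e^2 + 8*c^2*f^2 - 64*c*d^3 + 32*c*d^2*e + 32*c*d^2*f + 32*c*d*e^2 + 32*c*d*f^2 - 8*d^4 + 8*d^2*e^2 - 32*d^2*e*f + 8*d^2*f^2 - 32*d*e^2*f - 32*d*e*f^2 - 8*e^4 + 8*e^2*f^2 - 8*f^4)
    (-32*a^4*f - 64*a^3*f^2 - 32*a^2*b^2*d + 32*a^2*b^2*e + 32*a^2*b^2*f - 32*a^2*b*d^2 + 32*a^2*b*e^2 + 32*a^2*b*f^2 + 32*a^2*c^2*d - 32*a^2*c^2*e + 32*a^2*c^2*f + 32*a^2*c*d^2 - 32*a^2*c*e^2 + 32*a^2*c*f^2 + 32*a^2*d^2*f + 32*a^2*d*f^2 + 32*a^2*e^2*f + 32*a^2*e*f^2 - 64*a^2*f^3 - 32*a*b^2*d^2 + 32*a*b^2*e^2 + 32*a*b^2*f^2 + 32*a*c^2*d^2 - 32*a*c^2*e^2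 + 32*a*c^2*f^2 + 32*a*d^2*f^2 + 32*a*e^2*f^2 - 32*a*f^4 - 32*b^4*e - 64*b^3*e^2 + 32*b^2*c^2*d + 32*b^2*c^2*e - 32*b^2*c^2*f + 32*b^2*c*d^2 + 32*b^2*c*e^2 - 32*b^2*c*f^2 + 32*b^2*d^2*e + 32*b^2*d*e^2 - 64*b^2*e^3 + 32*b^2*e^2*f + 32*b^2*e*f^2 + 32*b*c^2*d^2 + 32*b*c^2*e^2 - 32*b*c^2*f^2 + 32*b*d^2*e^2 - 32*b*e^4 + 32*b*e^2*f^2 - 32*c^4*d - 64*c^3*d^2 - 64*c^2*d^3 + 32*c^2*d^2*e + 32*c^2*d^2*f + 32*c^2*d*e^2 + 32*c^2*d*f^2 - 32*c*d^4 + 32*c*d^2*e^2 + 32*c*d^2*f^2 - 32*d^2*e^2*f - 32*d^2*e*f^2 - 32*d*e^2*f^2)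
    (-32*a^4*f^2 - 32*a^2*b^2*d^2 + 32*a^2*b^2*e^2 + 32*a^2*b^2*f^2 + 32*a^2*c^2*d^2 - 32*a^2*c^2*e^2 + 32*a^2*c^2*f^2 + 32*a^2*d^2*f^2 + 32*a^2*e^2*f^2 - 32*a^2*f^4 - 32*b^4*e^2 + 32*b^2*c^2*d^2 + 32*b^2*c^2*e^2 - 32*b^2*c^2*f^2 + 32*b^2*d^2*e^2 - 32*b^2*e^4 + 32*b^2*e^2*f^2 - 32*c^4*d^2 - 32*c^2*d^4 + 32*c^2*d^2*e^2 + 32*c^2*d^2*f^2 - 32*d^2*e^2*f^2)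
  simp only [cmF] at h
  push_cast
  linear_combination 16 * h

lemma dist_sq_coords (p q : EuclideanSpace ℝ (Fin 2)) :
    dist p q ^ 2 = (p 0 - q 0)^2 + (p 1 - q 1)^2 := by
  rw [EuclideanSpace.dist_eq, Real.sq_sqrt (by positivity)]
  rw [Fin.sum_univ_two]
  simp [Real.dist_eq, sq_abs]

/-- **Shifted Erdős–Solymosi theorem, rational non-half-integer shift.**
If `s` is a rational number with `2s ∉ ℤ` and all pairwise distances between
distinct points of `A ⊆ ℝ²` lie in `{n + s : n ∈ ℕ}`, then `A` has at most
3 elements. -/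
theorem distance_set_shift_rational (s : ℚ) (hs : ∀ m : ℤ, 2 * s ≠ (m : ℚ))
    (A : Set (EuclideanSpace ℝ (Fin 2)))
    (hA : ∀ a ∈ A, ∀ a' ∈ A, a ≠ a' → ∃ n : ℕ, dist a a' = (n : ℝ) + (s : ℝ)) :
    A.Finite ∧ A.ncard ≤ 3 := by
  -- no four distinct points of `A` exist
  have no4 : ∀ p1 ∈ A, ∀ p2 ∈ A, ∀ p3 ∈ A, ∀ p4 ∈ A,
      p1 ≠ p2 → p1 ≠ p3 → p1 ≠ p4 → p2 ≠ p3 → p2 ≠ p4 → p3 ≠ p4 → False := by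
    intro p1 hp1 p2 hp2 p3 hp3 p4 hp4 h12 h13 h14 h23 h24 h34
    obtain ⟨n12, e12⟩ := hA p1 hp1 p2 hp2 h12
    obtain ⟨n13, e13⟩ := hA p1 hp1 p3 hp3 h13
    obtain ⟨n14, e14⟩ := hA p1 hp1 p4 hp4 h14
    obtain ⟨n23, e23⟩ := hA p2 hp2 p3 hp3 h23
    obtain ⟨n24, e24⟩ := hA p2 hp2 p4 hp4 h24
    obtain ⟨n34, e34⟩ := hA p3 hp3 p4 hp4 h34
    have q12 : ((n12:ℝ) + (s:ℝ))^2 = (p1 0 - p2 0)^2 + (p1 1 - p2 1)^2 := by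
      rw [← e12]; exact dist_sq_coords p1 p2
    have q13 : ((n13:ℝ) + (s:ℝ))^2 = (p1 0 - p3 0)^2 + (p1 1 - p3 1)^2 := by
      rw [← e13]; exact dist_sq_coords p1 p3
    have q14 : ((n14:ℝ) + (s:ℝ))^2 = (p1 0 - p4 0)^2 + (p1 1 - p4 1)^2 := by
      rw [← e14]; exact dist_sq_coords p1 p4
    have q23 : ((n23:ℝ) + (s:ℝ))^2 = (p2 0 - p3 0)^2 + (p2 1 - p3 1)^2 := by
      rw [← e23]; exact dist_sq_coords p2 p3
    have q24 : ((n24:ℝ) + (s:ℝ))^2 = (p2 0 - p4 0)^2 + (p2 1 - p4 1)^2 := by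
      rw [← e24]; exact dist_sq_coords p2 p4
    have q34 : ((n34:ℝ) + (s:ℝ))^2 = (p3 0 - p4 0)^2 + (p3 1 - p4 1)^2 := by
      rw [← e34]; exact dist_sq_coords p3 p4
    have hcmR : cmF (((n12:ℝ)+(s:ℝ))^2) (((n13:ℝ)+(s:ℝ))^2) (((n14:ℝ)+(s:ℝ))^2)
        (((n23:ℝ)+(s:ℝ))^2) (((n24:ℝ)+(s:ℝ))^2) (((n34:ℝ)+(s:ℝ))^2) = 0 := by
      rw [q12, q13, q14, q23, q24, q34]
      exact cm_geom (p1 0) (p1 1) (p2 0) (p2 1) (p3 0) (p3 1) (p4 0) (p4 1)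
    have hcmQ : cmF ((((n12:ℤ):ℚ)+s)^2) ((((n13:ℤ):ℚ)+s)^2) ((((n14:ℤ):ℚ)+s)^2)
        ((((n23:ℤ):ℚ)+s)^2) ((((n24:ℤ):ℚ)+s)^2) ((((n34:ℤ):ℚ)+s)^2) = 0 := by
      have hR := hcmR
      simp only [cmF] at hR ⊢
      rw [← Rat.cast_inj (α := ℝ)]
      push_cast
      linear_combination hR
    obtain ⟨m, hm⟩ := cm_int_root (n12:ℤ) (n13:ℤ) (n14:ℤ) (n23:ℤ) (n24:ℤ) (n34:ℤ) s hcmQ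
    exact hs m hm
  have key : ∀ t : Set (EuclideanSpace ℝ (Fin 2)), t ⊆ A → t.Finite → t.ncard = 4 → False := by
    intro t hsub hfin h4
    obtain ⟨p, hp⟩ : t.Nonempty := by
      rw [Set.nonempty_iff_ne_empty]
      intro hemp
      rw [hemp] at h4
      simp at h4
    have h3 : (t \ {p}).ncard = 3 := by
      rw [Set.ncard_diff_singleton_of_mem hp, h4]
    obtain ⟨x, y, z, hxy, hxz, hyz, hset⟩ := Set.ncard_eq_three.mp h3
    have hx : x ∈ t \ {p} := by rw [hset]; simp
    have hy : y ∈ t \ {p} := by rw [hset]; simp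
    have hz : z ∈ t \ {p} := by rw [hset]; simp
    have hxp : x ≠ p := by simpa using hx.2
    have hyp : y ≠ p := by simpa using hy.2
    have hzp : z ≠ p := by simpa using hz.2
    exact no4 p (hsub hp) x (hsub hx.1) y (hsub hy.1) z (hsub hz.1)
      hxp.symm hyp.symm hzp.symm hxy hxz hyz
  have hfinA : A.Finite := by
    by_contra hinf
    obtain ⟨t, hsub, hfin, h4⟩ := Set.Infinite.exists_subset_ncard_eq hinf 4
    exact key t hsub hfin h4
  refine ⟨hfinA, ?_⟩
  by_contra hle
  push_neg at hle
  obtain ⟨t, hsub, h4⟩ := Set.exists_subset_card_eq hle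
  exact key t hsub (hfinA.subset hsub) h4
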